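/- arXiv:1508.03500 — 2 statements merged into one kernel-verified Lean document; each statement's English description precedes it below -/
import Mathlib

section
/- Let G be a finite abelian group with D*(G) odd. Suppose E is a pair-nice zero-sum sequence, X_1, X_2, X_3 are atoms of length D*(G), and there exist a_i ∈ supp(X_i), i = 1,2,3, such that a_1 a_2 a_3 is an atom and E·X_1·X_2·X_3·(a_1 a_2 a_3)^{−1} is a product of length-2 atoms. Then E·X_1·X_2·X_3 is nice. -/
open scoped Pointwise

section Defs

variable (G : Type*) [AddCommGroup G]

/-- `S` is a minimal zero-sum sequence (an atom of the monoid `B(G)` of zero-sum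
sequences): it is nonempty, has sum zero, and no proper nonempty subsequence has sum zero. -/
def IsMinZS (S : Multiset G) : Prop :=
  S ≠ 0 ∧ S.sum = 0 ∧ ∀ T : Multiset G, T ≤ S → T ≠ 0 → T ≠ S → T.sum ≠ 0

/-- `S` is a product of `k` atoms of `B(G)`. -/
def IsProdOfAtoms (k : ℕ) (S : Multiset G) : Prop :=
  ∃ L : Multiset (Multiset G), Multiset.card L = k ∧ (∀ U ∈ L, IsMinZS G U) ∧ L.sum = S

/-- `S` is a product of atoms of length `2`. -/
def IsProd2Atoms (S : Multiset G) : Prop :=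
  ∃ L : Multiset (Multiset G), (∀ U ∈ L, IsMinZS G U ∧ Multiset.card U = 2) ∧ L.sum = S

/-- The set of lengths of `A` in `B(G)`. -/
def LSet (A : Multiset G) : Set ℕ := { k | IsProdOfAtoms G k A }

/-- `U_k(G)`: the set of `m` such that some product of `k` atoms equals a product of `m` atoms. -/
def UkSet (k : ℕ) : Set ℕ :=
  { m | ∃ S : Multiset G, IsProdOfAtoms G k S ∧ IsProdOfAtoms G m S }

/-- `ρ_k(G) = sup U_k(G)`. -/
noncomputable def rho (k : ℕ) : ℕ := sSup (UkSet G k)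

/-- The Davenport constant `D(G)`: the maximal length of a minimal zero-sum sequence. -/
noncomputable def Dav : ℕ :=
  sSup { n : ℕ | ∃ S : Multiset G, IsMinZS G S ∧ Multiset.card S = n }

/-- `A` is pair-nice with factorization into `2k` atoms of length `d` (where `d` plays
the role of `D^*(G)`). -/
def PairNiceWith (d k : ℕ) (A : Multiset G) : Prop :=
  1 ≤ k ∧ ∃ (U : Fin (2 * k) → Multiset G) (g : Fin (2 * k) → G),
    (∀ i, IsMinZS G (U i) ∧ Multiset.card (U i) = d) ∧
    (∑ i, U i) = A ∧ (∀ i, g i ∈ U i) ∧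
    IsProd2Atoms G (∑ i, ({g i} : Multiset G))

/-- `A` is pair-nice (with respect to `G`, with `d = D^*(G)`). -/
def PairNice (d : ℕ) (A : Multiset G) : Prop := ∃ k, PairNiceWith G d k A

/-- `A` is nice with factorization into `2k+1` atoms of length `d` (where `d` plays the
role of `D^*(G)`), as in Definition 3.1 of the paper. -/
def NiceWith [DecidableEq G] (d k : ℕ) (A : Multiset G) : Prop :=
  1 ≤ k ∧ ∃ (U : Fin (2 * k + 1) → Multiset G) (g : Fin (2 * k + 1) → G),
    (∀ i, IsMinZS G (U i) ∧ Multiset.card (U i) = d) ∧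
    (∑ i, U i) = A ∧ (∀ i, g i ∈ U i) ∧
    ((Odd d ∧ IsProd2Atoms G (A - ∑ i, ({g i} : Multiset G)) ∧
        ∃ W : Fin k → Multiset G, (∀ j, IsMinZS G (W j)) ∧
          (∀ j : Fin k, Multiset.card (W j) = if (j : ℕ) = 0 then 3 else 2) ∧
          (∑ j, W j) = ∑ i, ({g i} : Multiset G)) ∨
      (Even d ∧ ∃ h : G, h ∈ A - ∑ i, ({g i} : Multiset G) ∧
        IsProd2Atoms G (A - ((∑ i, ({g i} : Multiset G)) + {h})) ∧
        IsProd2Atoms G ((∑ i, ({g i} : Multiset G)) + {h})))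

/-- `A` is nice (with respect to `G`, with `d = D^*(G)`). -/
def Nice [DecidableEq G] (d : ℕ) (A : Multiset G) : Prop := ∃ k, NiceWith G d k A

end Defs

section MonoidDefs

variable (H : Type*) [CommMonoid H]

/-- `U_k(H)` for a monoid `H`: the set of `m` such that some product of `k` irreducible
elements (atoms) of `H` equals a product of `m` atoms. -/
def UkM (k : ℕ) : Set ℕ :=
  { m | ∃ L L' : Multiset H, Multiset.card L = k ∧ Multiset.card L' = m ∧
      (∀ u ∈ L, Irreducible u) ∧ (∀ v ∈ L', Irreducible v) ∧ L.prod = L'.prod }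

/-- `ρ_k(H) = sup U_k(H)`. -/
noncomputable def rhoM (k : ℕ) : ℕ := sSup (UkM H k)

end MonoidDefs


set_option linter.unusedSectionVars false

section Aux

variable {G : Type*} [AddCommGroup G] [DecidableEq G]

def Good (S : Multiset G) : Prop :=
  (0 : G) ∉ S ∧ ∀ h : G, S.count h = S.count (-h) ∧ (h = -h → Even (S.count h))

lemma pair_min {h : G} (hh : h ≠ 0) : IsMinZS G ({h, -h} : Multiset G) := by
  refine ⟨by simp, by simp, ?_⟩
  intro T hT hT0 hTne hsum
  have hc2 : Multiset.card T ≤ 2 := by simpa using Multiset.card_le_card hT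
  have hc0 : Multiset.card T ≠ 0 := by simpa [Multiset.card_eq_zero] using hT0
  have hcne : Multiset.card T ≠ 2 := by
    intro hc
    exact hTne (Multiset.eq_of_le_of_card_le hT (by simp [hc]))
  have hc1 : Multiset.card T = 1 := by omega
  obtain ⟨x, rfl⟩ := Multiset.card_eq_one.mp hc1
  have hx : x ∈ ({h, -h} : Multiset G) := Multiset.mem_of_le hT (by simp)
  simp only [Multiset.sum_singleton] at hsum
  rcases Multiset.mem_cons.mp hx with hx | hx
  · exact hh (hx ▸ hsum)
  · simp only [Multiset.mem_singleton] at hx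
    exact hh (neg_eq_zero.mp (hx ▸ hsum))

lemma atom2_shape {U : Multiset G} (hU : IsMinZS G U) (hc : Multiset.card U = 2) :
    ∃ h : G, h ≠ 0 ∧ U = {h, -h} := by
  obtain ⟨a, b, rfl⟩ := Multiset.card_eq_two.mp hc
  have hs : a + b = 0 := by simpa using hU.2.1
  have hb : b = -a := by
    have := hs; exact eq_neg_of_add_eq_zero_left (by rw [add_comm]; exact hs)
  have ha : a ≠ 0 := by
    intro h0
    refine hU.2.2 {a} (Multiset.singleton_le.mpr (by simp)) (by simp) ?_ (by simp [h0])
    intro e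
    have := congrArg Multiset.card e
    simp at this
  exact ⟨a, ha, by rw [hb]⟩

lemma count_pair (x h : G) :
    Multiset.count x ({h, -h} : Multiset G) =
      (if x = h then 1 else 0) + (if x = -h then 1 else 0) := by
  simp [Multiset.count_cons, Multiset.count_singleton]
  omega

lemma good_pair {h : G} (hh : h ≠ 0) : Good ({h, -h} : Multiset G) := by
  constructor
  · intro h0
    rcases Multiset.mem_cons.mp h0 with e | e
    · exact hh e.symm
    · simp only [Multiset.mem_singleton] at e
      exact hh (neg_eq_zero.mp e.symm)
  intro x
  constructor
  · rw [count_pair, count_pair]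
    have e1 : (-x = h) ↔ (x = -h) := by
      constructor <;> intro e
      · rw [← e, neg_neg]
      · rw [e, neg_neg]
    have e2 : (-x = -h) ↔ (x = h) := neg_inj
    rw [if_congr e2 rfl rfl, if_congr e1 rfl rfl]
    omega
  · intro hx
    rw [count_pair]
    by_cases h1 : x = h
    · subst h1
      simp only [if_pos rfl, if_pos hx]
      exact ⟨1, rfl⟩
    · have h2 : x ≠ -h := fun e => h1 (neg_inj.mp ((hx.symm.trans e)))
      simp [h1, h2]

lemma good_zero : Good (0 : Multiset G) := ⟨by simp, by simp⟩

lemma good_add {A B : Multiset G} (hA : Good A) (hB : Good B) : Good (A + B) := by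
  refine ⟨by simp [hA.1, hB.1], fun h => ?_⟩
  simp only [Multiset.count_add]
  exact ⟨by rw [(hA.2 h).1, (hB.2 h).1],
    fun hx => ((hA.2 h).2 hx).add ((hB.2 h).2 hx)⟩

lemma good_sub {B C : Multiset G} (hB : Good B) (hC : Good C) (hle : C ≤ B) :
    Good (B - C) := by
  refine ⟨fun h0 => hB.1 (Multiset.mem_of_le tsub_le_self h0), fun h => ?_⟩
  have hcle : ∀ x : G, C.count x ≤ B.count x := fun x => Multiset.le_iff_count.mp hle x
  simp only [Multiset.count_sub]
  constructor
  · rw [(hB.2 h).1, (hC.2 h).1]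
  · intro hx
    obtain ⟨p, hp⟩ := (hB.2 h).2 hx
    obtain ⟨q, hq⟩ := (hC.2 h).2 hx
    exact ⟨p - q, by have := hcle h; omega⟩

lemma good_of_prod2 {S : Multiset G} (hS : IsProd2Atoms G S) : Good S := by
  obtain ⟨L, hL, rfl⟩ := hS
  induction L using Multiset.induction with
  | empty => simpa using good_zero
  | cons U L IH =>
    rw [Multiset.sum_cons]
    have hU := hL U (Multiset.mem_cons_self U L)
    obtain ⟨h, hh, rfl⟩ := atom2_shape hU.1 hU.2
    exact good_add (good_pair hh) (IH fun V hV => hL V (Multiset.mem_cons_of_mem hV))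

lemma prod2_of_good : ∀ S : Multiset G, Good S → IsProd2Atoms G S := by
  intro S
  induction S using Multiset.strongInductionOn with
  | ih S IH =>
    intro hS
    rcases S.empty_or_exists_mem with rfl | ⟨h, hh⟩
    · exact ⟨0, by simp, by simp⟩
    have h0 : h ≠ 0 := fun e => hS.1 (e ▸ hh)
    have hple : ({h, -h} : Multiset G) ≤ S := by
      rw [Multiset.le_iff_count]
      intro x
      rw [count_pair]
      have hpos : 1 ≤ S.count h := Multiset.count_pos.mpr hh
      have hsym : S.count h = S.count (-h) := (hS.2 h).1
      by_cases h1 : x = h <;> by_cases h2 : x = -h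
      · simp only [if_pos h1, if_pos h2]
        have hxx : x = -x := h2.trans (by rw [h1])
        obtain ⟨p, hp⟩ := (hS.2 x).2 hxx
        have hp1 : 1 ≤ S.count x := Multiset.count_pos.mpr (h1 ▸ hh)
        omega
      · simp only [if_pos h1, if_neg h2]
        subst h1; omega
      · simp only [if_neg h1, if_pos h2]
        subst h2; omega
      · simp [h1, h2]
    set S' := S - ({h, -h} : Multiset G) with hS'
    have hgood' : Good S' := good_sub hS (good_pair h0) hple
    have hcard : Multiset.card S' < Multiset.card S := by
      rw [hS', Multiset.card_sub hple]
      have : 1 ≤ Multiset.card S := by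
        rw [Nat.one_le_iff_ne_zero, Ne, Multiset.card_eq_zero]
        intro e; rw [e] at hh; simp at hh
      simp only [Multiset.insert_eq_cons, Multiset.card_cons, Multiset.card_singleton]
      omega
    have hlt : S' < S := lt_of_le_of_ne tsub_le_self (fun e => by rw [e] at hcard; omega)
    obtain ⟨L, hL, hsum⟩ := IH S' hlt hgood'
    refine ⟨({h, -h} : Multiset G) ::ₘ L, ?_, ?_⟩
    · intro U hU
      rcases Multiset.mem_cons.mp hU with rfl | hU
      · exact ⟨pair_min h0, by simp⟩
      · exact hL U hU
    · rw [Multiset.sum_cons, hsum, hS', add_comm]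
      exact tsub_add_cancel_of_le hple

lemma prod2_sub {B C : Multiset G} (hB : IsProd2Atoms G B) (hC : IsProd2Atoms G C)
    (hle : C ≤ B) : IsProd2Atoms G (B - C) :=
  prod2_of_good _ (good_sub (good_of_prod2 hB) (good_of_prod2 hC) hle)

end Aux


section Main

variable {G : Type*} [AddCommGroup G] [DecidableEq G]

noncomputable def cardHom' : Multiset G →+ ℕ :=
  ⟨⟨Multiset.card, Multiset.card_zero⟩, Multiset.card_add⟩

@[simp] lemma cardHom'_apply (s : Multiset G) : cardHom' s = Multiset.card s := rfl

end Main

theorem stmt13_aux (G : Type*) [AddCommGroup G] [DecidableEq G]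
    (d : ℕ) (hdodd : Odd d)
    (E X1 X2 X3 : Multiset G) (hE : PairNice G d E)
    (hX1 : IsMinZS G X1 ∧ Multiset.card X1 = d)
    (hX2 : IsMinZS G X2 ∧ Multiset.card X2 = d)
    (hX3 : IsMinZS G X3 ∧ Multiset.card X3 = d)
    (a1 a2 a3 : G) (ha1 : a1 ∈ X1) (ha2 : a2 ∈ X2) (ha3 : a3 ∈ X3)
    (hatom : IsMinZS G ({a1, a2, a3} : Multiset G))
    (hprod : IsProd2Atoms G (E + X1 + X2 + X3 - ({a1, a2, a3} : Multiset G))) :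
    Nice G d (E + X1 + X2 + X3) := by
  obtain ⟨k, hk1, U, g, hU, hUsum, hgU, hg2⟩ := hE
  set A : Multiset G := E + X1 + X2 + X3 with hA
  set P3 : Multiset G := {a1, a2, a3} with hP3
  have hP3split : P3 = {a1} + {a2} + {a3} := rfl
  -- the combined families
  set V : Fin (2 * k + 3) → Multiset G := Fin.append U ![X1, X2, X3] with hV
  set gg : Fin (2 * k + 3) → G := Fin.append g ![a1, a2, a3] with hgg
  have hVprop : ∀ i, IsMinZS G (V i) ∧ Multiset.card (V i) = d := by
    intro i
    refine Fin.addCases (fun j => ?_) (fun j => ?_) i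
    · simpa [hV, Fin.append_left] using hU j
    · fin_cases j <;> simp [hV, Fin.append_right] <;>
        [exact hX1; exact hX2; exact hX3]
  have hVsum : (∑ i, V i) = A := by
    rw [hV, Fin.sum_univ_add]
    simp only [Fin.append_left, Fin.append_right, Fin.sum_univ_three]
    rw [hUsum, hA]
    simp [Matrix.cons_val_zero, Matrix.cons_val_one, add_assoc]
  have hggV : ∀ i, gg i ∈ V i := by
    intro i
    refine Fin.addCases (fun j => ?_) (fun j => ?_) i
    · simpa [hV, hgg, Fin.append_left] using hgU j
    · fin_cases j <;> simp [hV, hgg, Fin.append_right] <;>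
        [exact ha1; exact ha2; exact ha3]
  have hggsum : (∑ i, ({gg i} : Multiset G)) = (∑ i, ({g i} : Multiset G)) + P3 := by
    rw [hgg, Fin.sum_univ_add]
    simp only [Fin.append_left, Fin.append_right, Fin.sum_univ_three]
    rw [hP3split]
    simp [add_assoc]
  have hgle : (∑ i, ({g i} : Multiset G)) ≤ E := by
    rw [← hUsum]
    exact Finset.sum_le_sum fun i _ => Multiset.singleton_le.mpr (hgU i)
  have hP3le : P3 ≤ X1 + X2 + X3 := by
    rw [hP3split]
    exact add_le_add (add_le_add (Multiset.singleton_le.mpr ha1)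
      (Multiset.singleton_le.mpr ha2)) (Multiset.singleton_le.mpr ha3)
  have hAassoc : A = E + (X1 + X2 + X3) := by rw [hA, add_assoc, add_assoc, add_assoc]
  have hA3 : A - P3 = E + (X1 + X2 + X3 - P3) := by
    rw [hAassoc, add_tsub_assoc_of_le hP3le]
  have hEle : E ≤ A - P3 := by rw [hA3]; exact Multiset.le_add_right _ _
  have hgle2 : (∑ i, ({g i} : Multiset G)) ≤ A - P3 := hgle.trans hEle
  have hsub : IsProd2Atoms G (A - ∑ i, ({gg i} : Multiset G)) := by
    have : A - (∑ i, ({gg i} : Multiset G)) = (A - P3) - (∑ i, ({g i} : Multiset G)) := by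
      rw [hggsum, add_comm, tsub_add_eq_tsub_tsub]
    rw [this]
    exact prod2_sub hprod hg2 hgle2
  -- build W
  obtain ⟨L, hL, hLsum⟩ := hg2
  have hcardL : Multiset.card L = k := by
    have h1 : Multiset.card (L.sum) = 2 * k := by
      have hms := map_sum cardHom' (fun i => ({g i} : Multiset G))
        (Finset.univ : Finset (Fin (2 * k)))
      simp only [cardHom'_apply] at hms
      rw [hLsum, hms]
      simp
    have h2 : Multiset.card (L.sum) = 2 * Multiset.card L := by
      have hms := map_multiset_sum cardHom' L
      simp only [cardHom'_apply] at hms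
      rw [hms]
      have : Multiset.map (fun s => Multiset.card s) L = Multiset.map (fun _ => 2) L := by
        apply Multiset.map_congr rfl
        intro x hx
        simpa using (hL x hx).2
      change (Multiset.map (fun s => Multiset.card s) L).sum = _
      rw [this]
      simp [Multiset.map_const', mul_comm]
    omega
  set l : List (Multiset G) := L.toList with hl
  have hlen : l.length = k := by rw [hl, Multiset.length_toList, hcardL]
  have hlsum : l.sum = L.sum := Multiset.sum_toList L
  set W : Fin (k + 1) → Multiset G :=
    Fin.cons P3 (fun j => l.get (Fin.cast hlen.symm j)) with hW
  have hWmem : ∀ j : Fin k, l.get (Fin.cast hlen.symm j) ∈ L := by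
    intro j
    rw [← Multiset.mem_toList]
    exact List.get_mem _ _
  have hWmin : ∀ j, IsMinZS G (W j) := by
    intro j
    refine Fin.cases ?_ (fun j => ?_) j
    · rw [hW, Fin.cons_zero]; exact hatom
    · rw [hW, Fin.cons_succ]
      exact (hL _ (hWmem j)).1
  have hWcard : ∀ j : Fin (k + 1), Multiset.card (W j) = if (j : ℕ) = 0 then 3 else 2 := by
    intro j
    refine Fin.cases ?_ (fun j => ?_) j
    · rw [hW, Fin.cons_zero]; simp [hP3]
    · rw [hW, Fin.cons_succ]
      simp only [Fin.val_succ]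
      rw [if_neg (Nat.succ_ne_zero _)]
      exact (hL _ (hWmem j)).2
  have hgetsum : (∑ j : Fin k, l.get (Fin.cast hlen.symm j)) = l.sum := by
    have h1 : (List.ofFn l.get).sum = ∑ i : Fin l.length, l.get i := List.sum_ofFn
    rw [List.ofFn_get] at h1
    rw [h1]
    exact Fintype.sum_equiv (finCongr hlen.symm) _ _ fun j => rfl
  have hWsum : (∑ j, W j) = ∑ i, ({gg i} : Multiset G) := by
    rw [hW, Fin.sum_univ_succ]
    simp only [Fin.cons_zero, Fin.cons_succ]
    rw [hgetsum, hlsum, hLsum, hggsum, add_comm]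
  refine ⟨k + 1, Nat.le_add_left 1 k, V, gg, hVprop, hVsum, hggV,
    Or.inl ⟨hdodd, hsub, W, hWmin, hWcard, hWsum⟩⟩


/-- If `D^*(G)` is odd, `E` is pair-nice, `X₁, X₂, X₃` are atoms of length
`D^*(G)`, `a_i ∈ supp(X_i)` with `a₁a₂a₃` an atom and `E·X₁·X₂·X₃·(a₁a₂a₃)⁻¹` a product of
length-2 atoms, then `E·X₁·X₂·X₃` is nice. -/
theorem stmt13 (G : Type*) [AddCommGroup G] [DecidableEq G] (r : ℕ) (n : Fin r → ℕ)
    (h1 : ∀ i, 1 < n i) (hdvd : ∀ i j : Fin r, i ≤ j → n i ∣ n j)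
    (e : G ≃+ ((i : Fin r) → ZMod (n i)))
    (d : ℕ) (hd : d = 1 + ∑ i, (n i - 1)) (hdodd : Odd d)
    (E X1 X2 X3 : Multiset G) (hE : PairNice G d E)
    (hX1 : IsMinZS G X1 ∧ Multiset.card X1 = d)
    (hX2 : IsMinZS G X2 ∧ Multiset.card X2 = d)
    (hX3 : IsMinZS G X3 ∧ Multiset.card X3 = d)
    (a1 a2 a3 : G) (ha1 : a1 ∈ X1) (ha2 : a2 ∈ X2) (ha3 : a3 ∈ X3)
    (hatom : IsMinZS G ({a1, a2, a3} : Multiset G))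
    (hprod : IsProd2Atoms G (E + X1 + X2 + X3 - ({a1, a2, a3} : Multiset G))) :
    Nice G d (E + X1 + X2 + X3) := by
  exact stmt13_aux G d hdodd E X1 X2 X3 hE hX1 hX2 hX3 a1 a2 a3 ha1 ha2 ha3 hatom hprod
end

section
/- Let G be a finite abelian group with |G| ≥ 3 and suppose there exists a nice zero-sum sequence over G that is a product of 2k*+1 atoms of length D*(G). If moreover D(G) = D*(G), then for every k ≥ k*, ρ_{2k+1}(G) = k·D(G) + ⌊D(G)/2⌋. -/
open scoped Pointwise

section Aux

open Multiset in
theorem card_multiset_sum {G : Type*} (S : Multiset (Multiset G)) :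
    Multiset.card S.sum = (S.map Multiset.card).sum := by
  induction S using Multiset.induction with
  | empty => simp
  | cons a s ih => simp [ih]

theorem card_finset_sum {G : Type*} {ι : Type*} (s : Finset ι) (f : ι → Multiset G) :
    Multiset.card (∑ i ∈ s, f i) = ∑ i ∈ s, Multiset.card (f i) := by
  classical
  induction s using Finset.induction with
  | empty => simp
  | insert _ _ h ih => simp [Finset.sum_insert h, ih]

theorem sum_nsmul_multiset {G : Type*} (n : ℕ) (L : Multiset (Multiset G)) :
    (n • L).sum = n • L.sum := by
  induction n with
  | zero => simp
  | succ n ih => simp [succ_nsmul, add_smul, ih]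

variable {G : Type*} [AddCommGroup G] [DecidableEq G]

theorem atom_eq_zero_singleton {S : Multiset G} (hS : IsMinZS G S) (h0 : (0:G) ∈ S) :
    S = {0} := by
  by_contra hne
  exact hS.2.2 {0} (Multiset.singleton_le.mpr h0) (by simp)
    (fun h => hne h.symm) (by simp)

theorem atom_card_pos {S : Multiset G} (hS : IsMinZS G S) : 1 ≤ Multiset.card S :=
  Multiset.card_pos.mpr hS.1

theorem atom_two_le {S : Multiset G} (hS : IsMinZS G S) (hne : S ≠ {0}) :
    2 ≤ Multiset.card S := by
  have h1 := atom_card_pos hS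
  by_contra h
  have hc1 : Multiset.card S = 1 := by omega
  obtain ⟨x, rfl⟩ := Multiset.card_eq_one.mp hc1
  have hx : x = 0 := by simpa using hS.2.1
  exact hne (by rw [hx])

theorem atom_card_le_card [Fintype G] {S : Multiset G} (hS : IsMinZS G S) :
    Multiset.card S ≤ Fintype.card G := by
  by_contra hlt
  push_neg at hlt
  induction S using Quotient.inductionOn with
  | h l =>
  simp only [Multiset.quot_mk_to_coe] at *
  rw [Multiset.coe_card] at hlt
  have key : ∀ i j : ℕ, i < j → j ≤ Fintype.card G →
      (l.take i).sum = (l.take j).sum → False := by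
    intro i j hij hjle heq
    have hjlt : j < l.length := lt_of_le_of_lt hjle hlt
    have htake : l.take j = l.take i ++ (l.drop i).take (j - i) := by
      rw [← List.take_add]; congr 1; omega
    have hlen : ((l.drop i).take (j - i)).length = j - i := by
      rw [List.length_take, List.length_drop]; omega
    have hblock : ((l.drop i).take (j - i)).sum = 0 := by
      have h2 : (l.take j).sum = (l.take i).sum + ((l.drop i).take (j - i)).sum := by
        rw [htake, List.sum_append]
      rw [← heq] at h2
      have := (left_eq_add).mp h2
      exact this
    have hsub : ((l.drop i).take (j - i)).Sublist l :=
      (List.take_sublist _ _).trans (List.drop_sublist _ _)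
    have hle : (((l.drop i).take (j - i) : List G) : Multiset G) ≤ (l : Multiset G) :=
      Multiset.coe_le.mpr hsub.subperm
    refine hS.2.2 (((l.drop i).take (j - i) : List G) : Multiset G) hle ?_ ?_ ?_
    · intro h
      have : ((l.drop i).take (j - i)).length = 0 := by
        rw [← Multiset.coe_card, h]; rfl
      omega
    · intro h
      have : ((l.drop i).take (j - i)).length = l.length := by
        have := congrArg Multiset.card h
        simpa using this
      omega
    · simpa using hblock
  obtain ⟨i, hi, j, hj, hij, heq⟩ :=
    Finset.exists_ne_map_eq_of_card_lt_of_maps_to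
      (s := Finset.range (Fintype.card G + 1)) (t := (Finset.univ : Finset G))
      (by simp) (fun a _ => Finset.mem_univ (l.take a).sum)
  simp only [Finset.mem_range] at hi hj
  rcases Nat.lt_or_ge i j with h | h
  · exact key i j h (by omega) heq
  · have hji : j < i := lt_of_le_of_ne h (fun e => hij e.symm)
    exact key j i hji (by omega) heq.symm

theorem zero_atom : IsMinZS G ({0} : Multiset G) := by
  refine ⟨by simp, by simp, ?_⟩
  intro T hT hT0 hTS
  rcases Multiset.le_singleton.mp hT with h | h
  · exact absurd h hT0
  · exact absurd h hTS

theorem dav_set_bddAbove [Fintype G] :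
    BddAbove {n : ℕ | ∃ S : Multiset G, IsMinZS G S ∧ Multiset.card S = n} := by
  refine ⟨Fintype.card G, ?_⟩
  rintro m ⟨S, hS, rfl⟩
  exact atom_card_le_card hS

theorem dav_mem [Fintype G] : ∃ S : Multiset G, IsMinZS G S ∧ Multiset.card S = Dav G := by
  have h : (1:ℕ) ∈ {n : ℕ | ∃ S : Multiset G, IsMinZS G S ∧ Multiset.card S = n} :=
    ⟨({0} : Multiset G), zero_atom, by simp⟩
  unfold Dav
  exact Nat.sSup_mem ⟨1, h⟩ dav_set_bddAbove

theorem card_le_dav [Fintype G] {S : Multiset G} (hS : IsMinZS G S) :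
    Multiset.card S ≤ Dav G := by
  unfold Dav
  exact le_csSup dav_set_bddAbove ⟨S, hS, rfl⟩

/-- Facts about any atomic factorization `L` of `S`. -/
theorem factorization_facts [Fintype G] {S : Multiset G} (L : Multiset (Multiset G))
    (hLa : ∀ U ∈ L, IsMinZS G U) (hLs : L.sum = S) :
    Multiset.count ({0} : Multiset G) L = Multiset.count (0 : G) S ∧
    (Multiset.card S =
      Multiset.count ({0} : Multiset G) L + ((L.filter (· ≠ ({0}:Multiset G))).map Multiset.card).sum) ∧
    (Multiset.card L =
      Multiset.count ({0} : Multiset G) L + Multiset.card (L.filter (· ≠ ({0}:Multiset G)))) ∧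
    (2 * Multiset.card (L.filter (· ≠ ({0}:Multiset G)))
        ≤ ((L.filter (· ≠ ({0}:Multiset G))).map Multiset.card).sum) ∧
    (((L.filter (· ≠ ({0}:Multiset G))).map Multiset.card).sum
        ≤ Multiset.card (L.filter (· ≠ ({0}:Multiset G))) * Dav G) := by
  classical
  set t := Multiset.count ({0} : Multiset G) L with ht
  set Lp := L.filter (· ≠ ({0}:Multiset G)) with hLp
  have hsplit : L = Multiset.replicate t ({0}:Multiset G) + Lp := by
    rw [hLp, ht, ← Multiset.filter_eq' L ({0}:Multiset G)]
    exact (Multiset.filter_add_not _ L).symm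
  have hLpa : ∀ U ∈ Lp, IsMinZS G U ∧ U ≠ ({0}:Multiset G) := by
    intro U hU
    rw [hLp, Multiset.mem_filter] at hU
    exact ⟨hLa U (hU.1), hU.2⟩
  constructor
  · -- count of zeros
    have h1 : Multiset.count (0:G) L.sum = (L.map (fun U => Multiset.count (0:G) U)).sum := by
      conv_lhs => rw [show L = L.map id from (Multiset.map_id L).symm]
      exact Multiset.count_sum
    rw [← hLs, h1]
    conv_rhs => rw [hsplit]
    rw [Multiset.map_add, Multiset.sum_add]
    have h2 : (Multiset.replicate t ({0}:Multiset G)).map (fun U => Multiset.count (0:G) U)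
        = Multiset.replicate t 1 := by
      rw [Multiset.map_replicate]; simp
    have h3 : (Lp.map (fun U => Multiset.count (0:G) U)).sum = 0 := by
      apply Multiset.sum_eq_zero
      intro x hx
      obtain ⟨U, hU, rfl⟩ := Multiset.mem_map.mp hx
      obtain ⟨hUa, hUne⟩ := hLpa U hU
      rw [Multiset.count_eq_zero]
      intro h0
      exact hUne (atom_eq_zero_singleton hUa h0)
    rw [h2, h3, Multiset.sum_replicate]
    simp
  refine ⟨?_, ?_, ?_, ?_⟩
  · rw [← hLs, card_multiset_sum]
    conv_lhs => rw [hsplit]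
    rw [Multiset.map_add, Multiset.sum_add, Multiset.map_replicate]
    simp
  · conv_lhs => rw [hsplit]
    simp [Multiset.card_replicate]
  · have : (Lp.map (fun _ => (2:ℕ))).sum ≤ (Lp.map Multiset.card).sum := by
      apply Multiset.sum_map_le_sum_map
      intro U hU
      exact atom_two_le (hLpa U hU).1 (hLpa U hU).2
    simpa [Multiset.map_const', Multiset.sum_replicate, Nat.mul_comm] using this
  · have : (Lp.map Multiset.card).sum ≤ (Lp.map (fun _ => Dav G)).sum := by
      apply Multiset.sum_map_le_sum_map
      intro U hU
      exact card_le_dav (hLpa U hU).1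
    simpa [Multiset.map_const', Multiset.sum_replicate, Nat.mul_comm] using this

theorem rho_upper [Fintype G] (hD2 : 2 ≤ Dav G) {k m : ℕ}
    (hm : m ∈ UkSet G (2 * k + 1)) : m ≤ k * Dav G + Dav G / 2 := by
  classical
  obtain ⟨S, ⟨L, hLc, hLa, hLs⟩, ⟨L', hL'c, hL'a, hL's⟩⟩ := hm
  obtain ⟨hcnt, hcS, hcL, h2le, hleD⟩ := factorization_facts L hLa hLs
  obtain ⟨hcnt', hcS', hcL', h2le', hleD'⟩ := factorization_facts L' hL'a hL's
  set t := Multiset.count (0:G) S with htdef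
  rw [hcnt] at hcS hcL
  rw [hcnt'] at hcS' hcL'
  set a := Multiset.card (L.filter (· ≠ ({0}:Multiset G))) with ha
  set b := Multiset.card (L'.filter (· ≠ ({0}:Multiset G))) with hb
  set sL := ((L.filter (· ≠ ({0}:Multiset G))).map Multiset.card).sum with hsL
  set sL' := ((L'.filter (· ≠ ({0}:Multiset G))).map Multiset.card).sum with hsL'
  -- sL = sL'
  have hss : sL = sL' := by omega
  have hm2 : m = t + b := by omega
  have key : 2 * m ≤ 2 * (k * Dav G) + Dav G := by
    have h1 : 2 * b ≤ a * Dav G := le_trans (hss ▸ h2le') hleD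
    have h2 : t * 2 ≤ t * Dav G := Nat.mul_le_mul_left t hD2
    have h3 : t * Dav G + a * Dav G = (2 * k + 1) * Dav G := by
      rw [← add_mul, show t + a = 2*k+1 from by omega]
    calc 2 * m = 2 * t + 2 * b := by omega
      _ ≤ 2 * t + a * Dav G := Nat.add_le_add_left h1 (2 * t)
      _ ≤ t * Dav G + a * Dav G := Nat.add_le_add_right (by rw [Nat.mul_comm 2 t]; exact h2) _
      _ = (2 * k + 1) * Dav G := h3
      _ = 2 * (k * Dav G) + Dav G := by ring
  obtain ⟨p, hp⟩ : ∃ p, p = k * Dav G := ⟨_, rfl⟩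
  rw [← hp] at key ⊢
  omega

theorem pair_atom {g : G} (hg : g ≠ 0) : IsMinZS G ({g, -g} : Multiset G) := by
  refine ⟨by simp, by simp, ?_⟩
  intro T hT hT0 hTS
  have hcT : Multiset.card T ≤ 2 := by
    have := Multiset.card_le_card hT
    simpa using this
  have h0 : 0 < Multiset.card T := Multiset.card_pos.mpr hT0
  have hc1 : Multiset.card T = 1 := by
    rcases Nat.lt_or_ge (Multiset.card T) 2 with h | h
    · omega
    · exact absurd (Multiset.eq_of_le_of_card_le hT (by simpa using h)) hTS
  obtain ⟨x, rfl⟩ := Multiset.card_eq_one.mp hc1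
  have hx : x ∈ ({g, -g} : Multiset G) :=
    Multiset.mem_of_le hT (Multiset.mem_singleton_self x)
  simp only [Multiset.insert_eq_cons, Multiset.mem_cons, Multiset.mem_singleton] at hx
  rcases hx with rfl | rfl
  · simpa using hg
  · simpa using (neg_ne_zero.mpr hg)

theorem neg_atom {V : Multiset G} (hV : IsMinZS G V) :
    IsMinZS G (V.map (fun x => -x)) := by
  obtain ⟨h0, hs, hmin⟩ := hV
  refine ⟨by simpa using h0, by rw [Multiset.sum_map_neg', hs, neg_zero], ?_⟩
  intro T hT hT0 hTS hsum0
  have hT' : T.map (fun x => -x) ≤ V := by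
    have h := Multiset.map_le_map (f := fun x : G => -x) hT
    simpa [Multiset.map_map, Function.comp] using h
  refine hmin (T.map (fun x => -x)) hT' (by simpa using hT0) ?_ ?_
  · intro h
    apply hTS
    have := congrArg (Multiset.map (fun x : G => -x)) h
    simpa [Multiset.map_map, Function.comp] using this
  · rw [Multiset.sum_map_neg', hsum0, neg_zero]

theorem prod2_pairs {V : Multiset G} (hz : ∀ x ∈ V, x ≠ 0) :
    ∃ L : Multiset (Multiset G), (∀ P ∈ L, IsMinZS G P ∧ Multiset.card P = 2) ∧
      L.sum = V + V.map (fun x => -x) ∧ Multiset.card L = Multiset.card V := by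
  refine ⟨V.map (fun x => ({x, -x} : Multiset G)), ?_, ?_, by simp⟩
  · intro P hP
    obtain ⟨x, hx, rfl⟩ := Multiset.mem_map.mp hP
    refine ⟨pair_atom (hz x hx), ?_⟩
    simp [Multiset.insert_eq_cons]
  · have h1 : V.map (fun x => ({x, -x} : Multiset G))
        = V.map (fun x => ({x} : Multiset G) + ({-x} : Multiset G)) := by
      apply Multiset.map_congr rfl
      intro x _
      simp [Multiset.insert_eq_cons, Multiset.singleton_add]
    rw [h1, Multiset.sum_map_add, Multiset.sum_map_singleton]
    congr 1
    have h2 : V.map (fun x => ({-x} : Multiset G))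
        = (V.map (fun x : G => -x)).map (fun y => ({y} : Multiset G)) := by
      rw [Multiset.map_map]; rfl
    rw [h2, Multiset.sum_map_singleton]

theorem prodAtoms_add {k₁ k₂ : ℕ} {S₁ S₂ : Multiset G}
    (h₁ : IsProdOfAtoms G k₁ S₁) (h₂ : IsProdOfAtoms G k₂ S₂) :
    IsProdOfAtoms G (k₁ + k₂) (S₁ + S₂) := by
  obtain ⟨L₁, hc₁, ha₁, hs₁⟩ := h₁
  obtain ⟨L₂, hc₂, ha₂, hs₂⟩ := h₂
  refine ⟨L₁ + L₂, by simp [hc₁, hc₂], ?_, by simp [hs₁, hs₂]⟩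
  intro U hU
  rcases Multiset.mem_add.mp hU with h | h
  exacts [ha₁ U h, ha₂ U h]

end Aux

section Aux2

variable {G : Type*} [AddCommGroup G] [DecidableEq G]

theorem nice_mem [Fintype G] {d kstar : ℕ} (hd3 : 3 ≤ d) {A : Multiset G}
    (hA : NiceWith G d kstar A) (hDD : Dav G = d) {k : ℕ} (hk : kstar ≤ k) :
    ∃ S : Multiset G, IsProdOfAtoms G (2 * k + 1) S ∧ IsProdOfAtoms G (k * d + d / 2) S := by
  classical
  obtain ⟨hk1, U, g, hU, hUsum, hgmem, hcases⟩ := hA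
  set B : Multiset G := ∑ i, ({g i} : Multiset G) with hB
  have hBA : B ≤ A := by
    rw [← hUsum]
    exact Finset.sum_le_sum fun i _ => Multiset.singleton_le.mpr (hgmem i)
  have hcardA : Multiset.card A = (2 * kstar + 1) * d := by
    rw [← hUsum, card_finset_sum, Finset.sum_congr rfl (fun i _ => (hU i).2)]
    simp [Finset.card_univ, mul_comm]
  have hcardB : Multiset.card B = 2 * kstar + 1 := by
    rw [hB, card_finset_sum]
    simp
  have hAleft : IsProdOfAtoms G (2 * kstar + 1) A := by
    refine ⟨Multiset.map U Finset.univ.val, by simp, ?_, ?_⟩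
    · intro W hW
      obtain ⟨i, _, rfl⟩ := Multiset.mem_map.mp hW
      exact (hU i).1
    · rw [← hUsum]; rfl
  have hd2k : 2 * kstar + 1 ≤ (2 * kstar + 1) * d :=
    Nat.le_mul_of_pos_right _ (by omega)
  obtain ⟨p, hp⟩ : ∃ p, p = kstar * d := ⟨_, rfl⟩
  have hexp : (2 * kstar + 1) * d = 2 * p + d := by rw [hp]; ring
  have hAfine : IsProdOfAtoms G (kstar * d + d / 2) A := by
    rw [← hp]
    rcases hcases with ⟨hodd, ⟨L2, hL2p, hL2s⟩, W, hWa, hWc, hWs⟩ |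
      ⟨heven, h, hhmem, ⟨L2a, hL2ap, hL2as⟩, ⟨L2b, hL2bp, hL2bs⟩⟩
    · -- odd case
      have hdo : d % 2 = 1 := Nat.odd_iff.mp hodd
      have hsumL2 : Multiset.card (A - B) = 2 * Multiset.card L2 := by
        rw [← hL2s, card_multiset_sum,
          Multiset.map_congr rfl (fun V hV => (hL2p V hV).2)]
        simp [Multiset.map_const', Multiset.sum_replicate, mul_comm]
      have hfin : Multiset.card (A - B) + (2 * kstar + 1) = 2 * p + d := by
        rw [Multiset.card_sub hBA, hcardB, hcardA, ← hexp]
        omega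
      refine ⟨L2 + Multiset.map W Finset.univ.val, ?_, ?_, ?_⟩
      · rw [Multiset.card_add]
        simp only [Multiset.card_map]
        have hcuniv : Multiset.card (Finset.univ.val : Multiset (Fin kstar)) = kstar := by
          simp
        rw [hcuniv]
        omega
      · intro V hV
        rcases Multiset.mem_add.mp hV with hV | hV
        · exact (hL2p V hV).1
        · obtain ⟨j, _, rfl⟩ := Multiset.mem_map.mp hV
          exact hWa j
      · rw [Multiset.sum_add, hL2s]
        have hWB : (Multiset.map W Finset.univ.val).sum = B := by rw [← hWs]; rfl
        rw [hWB]
        exact tsub_add_cancel_of_le hBA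
    · -- even case
      have hde : d % 2 = 0 := Nat.even_iff.mp heven
      have hBh : B + {h} ≤ A := by
        have h1 : ({h} : Multiset G) ≤ A - B := Multiset.singleton_le.mpr hhmem
        calc B + {h} ≤ B + (A - B) := (add_le_add_iff_left B).mpr h1
          _ = A := add_tsub_cancel_of_le hBA
      have hcardBh : Multiset.card (B + {h}) = 2 * kstar + 2 := by
        rw [Multiset.card_add, hcardB]; simp
      have hsumL2a : Multiset.card (A - (B + {h})) = 2 * Multiset.card L2a := by
        rw [← hL2as, card_multiset_sum,
          Multiset.map_congr rfl (fun V hV => (hL2ap V hV).2)]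
        simp [Multiset.map_const', Multiset.sum_replicate, mul_comm]
      have hsumL2b : 2 * kstar + 2 = 2 * Multiset.card L2b := by
        rw [← hcardBh, ← hL2bs, card_multiset_sum,
          Multiset.map_congr rfl (fun V hV => (hL2bp V hV).2)]
        simp [Multiset.map_const', Multiset.sum_replicate, mul_comm]
      have hfin : Multiset.card (A - (B + {h})) + (2 * kstar + 2) = 2 * p + d := by
        rw [Multiset.card_sub hBh, hcardBh, hcardA, ← hexp]
        have h2k2 : 2 * kstar + 2 ≤ (2 * kstar + 1) * d := by
          calc 2 * kstar + 2 ≤ (2 * kstar + 1) * 2 := by omega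
            _ ≤ (2 * kstar + 1) * d := Nat.mul_le_mul_left _ (by omega)
        omega
      refine ⟨L2a + L2b, ?_, ?_, ?_⟩
      · rw [Multiset.card_add]
        omega
      · intro V hV
        rcases Multiset.mem_add.mp hV with hV | hV
        · exact (hL2ap V hV).1
        · exact (hL2bp V hV).1
      · rw [Multiset.sum_add, hL2as, hL2bs]
        exact tsub_add_cancel_of_le hBh
  -- padding
  obtain ⟨V, hVatom, hVcard⟩ := dav_mem (G := G)
  rw [hDD] at hVcard
  have hVz : ∀ x ∈ V, x ≠ 0 := by
    intro x hx hx0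
    subst hx0
    have hV0 := atom_eq_zero_singleton hVatom hx
    rw [hV0] at hVcard
    simp at hVcard
    omega
  obtain ⟨LP, hLPa, hLPs, hLPc⟩ := prod2_pairs hVz
  set nn := k - kstar with hnn
  set Vneg := V.map (fun x : G => -x) with hVneg
  refine ⟨A + nn • (V + Vneg), ?_, ?_⟩
  · -- product of 2k+1 atoms
    have hpad : IsProdOfAtoms G (2 * nn) (nn • (V + Vneg)) := by
      refine ⟨Multiset.replicate nn V + Multiset.replicate nn Vneg, ?_, ?_, ?_⟩
      · rw [Multiset.card_add, Multiset.card_replicate, Multiset.card_replicate]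
        omega
      · intro W hW
        rcases Multiset.mem_add.mp hW with hW | hW
        · rw [Multiset.eq_of_mem_replicate hW]
          exact hVatom
        · rw [Multiset.eq_of_mem_replicate hW]
          exact neg_atom hVatom
      · rw [Multiset.sum_add, Multiset.sum_replicate, Multiset.sum_replicate, ← smul_add]
    have hcomb := prodAtoms_add hAleft hpad
    rw [show 2 * kstar + 1 + 2 * nn = 2 * k + 1 from by omega] at hcomb
    exact hcomb
  · -- product of k*d + d/2 atoms
    have hpad : IsProdOfAtoms G (nn * d) (nn • (V + Vneg)) := by
      refine ⟨nn • LP, ?_, ?_, ?_⟩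
      · rw [Multiset.card_nsmul, hLPc, hVcard]
      · intro W hW
        exact (hLPa W (Multiset.mem_nsmul.mp hW).2).1
      · rw [sum_nsmul_multiset, hLPs]
    have hcomb := prodAtoms_add hAfine hpad
    rw [show kstar * d + d / 2 + nn * d = k * d + d / 2 from by
      have : kstar * d + nn * d = k * d := by
        rw [← add_mul]
        congr 1
        omega
      omega] at hcomb
    exact hcomb

end Aux2

/-- If `|G| ≥ 3`, there is a nice zero-sum sequence which is a product of
`2k*+1` atoms of length `D^*(G)`, and `D(G) = D^*(G)`, then for every `k ≥ k*`,
`ρ_{2k+1}(G) = k·D(G) + ⌊D(G)/2⌋`. -/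
theorem stmt15 (G : Type*) [AddCommGroup G] [DecidableEq G] [Fintype G] (hG : 3 ≤ Fintype.card G)
    (r : ℕ) (n : Fin r → ℕ)
    (h1 : ∀ i, 1 < n i) (hdvd : ∀ i j : Fin r, i ≤ j → n i ∣ n j)
    (e : G ≃+ ((i : Fin r) → ZMod (n i)))
    (d : ℕ) (hd : d = 1 + ∑ i, (n i - 1))
    (kstar : ℕ) (A : Multiset G) (hA : NiceWith G d kstar A)
    (hDD : Dav G = d) :
    ∀ k : ℕ, kstar ≤ k → rho G (2 * k + 1) = k * Dav G + Dav G / 2 := by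
  intro k hk
  -- |G| = ∏ n i
  have hcard : Fintype.card G = ∏ i, n i := by
    haveI : ∀ i, NeZero (n i) := fun i => ⟨by have := h1 i; omega⟩
    rw [Fintype.card_congr e.toEquiv, Fintype.card_pi]
    exact Finset.prod_congr rfl fun i _ => ZMod.card (n i)
  have hd3 : 3 ≤ d := by
    by_contra hlt
    push_neg at hlt
    have hsum : ∑ i, (n i - 1) ≤ 1 := by omega
    have hle : ∀ i ∈ (Finset.univ : Finset (Fin r)), n i ≤ 2 ^ (n i - 1) := by
      intro i _
      have h2 : n i - 1 < 2 ^ (n i - 1) := Nat.lt_two_pow_self (n := n i - 1)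
      have := h1 i
      omega
    have hprod : ∏ i, n i ≤ 2 ^ (∑ i, (n i - 1)) := by
      calc ∏ i, n i ≤ ∏ i, 2 ^ (n i - 1) := Finset.prod_le_prod' hle
        _ = 2 ^ (∑ i, (n i - 1)) := Finset.prod_pow_eq_pow_sum _ _ _
    have h2le : (2:ℕ) ^ (∑ i, (n i - 1)) ≤ 2 ^ 1 :=
      Nat.pow_le_pow_right (by norm_num) hsum
    have h3 : (3:ℕ) ≤ ∏ i, n i := hcard ▸ hG
    omega
  have hD2 : 2 ≤ Dav G := by omega
  obtain ⟨S, hS1, hS2⟩ := nice_mem hd3 hA hDD hk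
  have hmem : (k * d + d / 2) ∈ UkSet G (2 * k + 1) := ⟨S, hS1, hS2⟩
  have hub : ∀ x ∈ UkSet G (2 * k + 1), x ≤ k * Dav G + Dav G / 2 :=
    fun x hx => rho_upper hD2 hx
  rw [hDD] at hub
  unfold rho
  rw [hDD]
  exact le_antisymm (csSup_le ⟨_, hmem⟩ hub) (le_csSup ⟨_, hub⟩ hmem)
end
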